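/- The value function V* of the perpetual δ-penalty call option is non-decreasing in the initial asset price and Lipschitz continuous with Lipschitz constant 1: for all 0 < x ≤ y one has 0 ≤ V*(y) − V*(x) ≤ y − x. -/

import Mathlib

open MeasureTheory ProbabilityTheory
open scoped NNReal ENNReal

noncomputable section

/-- A stopping time with values in `ℝ≥0∞` with respect to a filtration indexed by `ℝ≥0`. -/
def IsStoppingTimeE {Ω : Type*} {m : MeasurableSpace Ω} (ℱ : Filtration ℝ≥0 m)
    (τ : Ω → ℝ≥0∞) : Prop :=
  ∀ t : ℝ≥0, MeasurableSet[ℱ t] {ω | τ ω ≤ (t : ℝ≥0∞)}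

/-- `W` is a standard one-dimensional Brownian motion with respect to the filtration `ℱ`
and the probability measure `P`. -/
structure IsStandardBrownian {Ω : Type*} {m : MeasurableSpace Ω} (ℱ : Filtration ℝ≥0 m)
    (P : Measure Ω) (W : ℝ≥0 → Ω → ℝ) : Prop where
  adapted : Adapted ℱ W
  init : ∀ᵐ ω ∂P, W 0 ω = 0
  cont : ∀ᵐ ω ∂P, Continuous fun t : ℝ≥0 => W t ω
  indep_incr : ∀ s t : ℝ≥0, s ≤ t →
    Indep (MeasurableSpace.comap (fun ω => W t ω - W s ω) (borel ℝ)) (ℱ s) P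
  gauss_incr : ∀ s t : ℝ≥0, s ≤ t →
    P.map (fun ω => W t ω - W s ω) = gaussianReal 0 (t - s)

/-- The exponential process `N_t = exp((r - d - σ²/2) t + σ W_t)`. -/
def assetN {Ω : Type*} (r d σ : ℝ) (W : ℝ≥0 → Ω → ℝ) (t : ℝ≥0) (ω : Ω) : ℝ :=
  Real.exp ((r - d - σ ^ 2 / 2) * (t : ℝ) + σ * W t ω)

/-- The discounted payoff to the holder of the δ-penalty call when the holder exercises at `ρ`
and the writer cancels at `τ`, with the convention that the payoff is `0` on `{ρ = τ = ∞}`. -/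
def gamePayoff {Ω : Type*} (r d σ K δ : ℝ) (W : ℝ≥0 → Ω → ℝ) (x : ℝ)
    (ρ τ : Ω → ℝ≥0∞) (ω : Ω) : ℝ :=
  if ρ ω = ⊤ ∧ τ ω = ⊤ then 0
  else
    Real.exp (-r * (min (ρ ω) (τ ω)).toReal) *
      (if τ ω < ρ ω then max (x * assetN r d σ W (τ ω).toNNReal ω - K) 0 + δ
       else max (x * assetN r d σ W (ρ ω).toNNReal ω - K) 0)

/-- The expected discounted payoff `J^x(ρ, τ)`. -/
def gameJ {Ω : Type*} {m : MeasurableSpace Ω} (P : Measure Ω) (r d σ K δ : ℝ)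
    (W : ℝ≥0 → Ω → ℝ) (x : ℝ) (ρ τ : Ω → ℝ≥0∞) : ℝ :=
  ∫ ω, gamePayoff r d σ K δ W x ρ τ ω ∂P

/-- The value `V*(x) = inf_τ sup_ρ J^x(ρ, τ)` of the perpetual δ-penalty call option. -/
def gameValue {Ω : Type*} {m : MeasurableSpace Ω} (ℱ : Filtration ℝ≥0 m) (P : Measure Ω)
    (r d σ K δ : ℝ) (W : ℝ≥0 → Ω → ℝ) (x : ℝ) : ℝ :=
  ⨅ τ : {τ : Ω → ℝ≥0∞ // IsStoppingTimeE ℱ τ},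
    ⨆ ρ : {ρ : Ω → ℝ≥0∞ // IsStoppingTimeE ℱ ρ},
      gameJ P r d σ K δ W x ρ.1 τ.1

open Real Filter
open scoped Topology

namespace GameAux

lemma meas_exp_mul (c : ℝ) : Measurable fun x : ℝ => rexp (c * x) :=
  (measurable_id.const_mul c).exp

lemma exp_gauss_key (c : ℝ) {v : ℝ≥0} (hv : v ≠ 0) (x : ℝ) :
    rexp (c * x) * gaussianPDFReal 0 v x
      = rexp (c ^ 2 * v / 2) * gaussianPDFReal (c * v) v x := by
  simp only [gaussianPDFReal]
  have hv0 : (v : ℝ) ≠ 0 := by exact_mod_cast hv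
  have h : -(x - 0) ^ 2 / (2 * v) + c * x = c ^ 2 * v / 2 + -(x - c * v) ^ 2 / (2 * v) := by
    field_simp
    ring
  rw [mul_comm (rexp (c * x)), mul_assoc, ← Real.exp_add, h, Real.exp_add, mul_left_comm]

lemma integrable_exp_gauss (c : ℝ) (v : ℝ≥0) :
    Integrable (fun x => rexp (c * x)) (gaussianReal 0 v) := by
  by_cases hv : v = 0
  · subst hv
    rw [gaussianReal_zero_var]
    refine ⟨(meas_exp_mul c).aestronglyMeasurable, ?_⟩
    rw [HasFiniteIntegral, lintegral_dirac' _ (meas_exp_mul c).enorm]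
    exact ENNReal.coe_lt_top
  · rw [gaussianReal_of_var_ne_zero _ hv,
      integrable_withDensity_iff (measurable_gaussianPDF _ _)
      (ae_of_all _ fun x => ENNReal.ofReal_lt_top)]
    refine (Integrable.congr ((integrable_gaussianPDFReal (c * v) v).const_mul
      (rexp (c ^ 2 * v / 2))) (ae_of_all _ fun x => ?_))
    simp only [gaussianPDF, ENNReal.toReal_ofReal (gaussianPDFReal_nonneg 0 v x)]
    exact (exp_gauss_key c hv x).symm

lemma integral_exp_gauss (c : ℝ) (v : ℝ≥0) :
    ∫ x, rexp (c * x) ∂(gaussianReal 0 v) = rexp (c ^ 2 * v / 2) := by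
  by_cases hv : v = 0
  · subst hv
    rw [gaussianReal_zero_var,
      integral_dirac' _ _ (meas_exp_mul c).stronglyMeasurable]
    simp
  · rw [gaussianReal_of_var_ne_zero _ hv]
    have hpdf : gaussianPDF 0 v = fun x => ((gaussianPDFReal 0 v x).toNNReal : ℝ≥0∞) :=
      funext fun x => rfl
    rw [hpdf, integral_withDensity_eq_integral_smul
      (measurable_gaussianPDFReal 0 v).real_toNNReal _]
    have : ∀ x : ℝ, (gaussianPDFReal 0 v x).toNNReal • rexp (c * x)
        = rexp (c ^ 2 * v / 2) * gaussianPDFReal (c * v) v x := by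
      intro x
      rw [NNReal.smul_def, smul_eq_mul, Real.coe_toNNReal _ (gaussianPDFReal_nonneg 0 v x),
        mul_comm, exp_gauss_key c hv x]
    rw [integral_congr_ae (ae_of_all _ this), integral_const_mul,
      integral_gaussianPDFReal_eq_one (c * v) hv, mul_one]

variable {Ω : Type*} {m : MeasurableSpace Ω} {ℱ : Filtration ℝ≥0 m} {P : Measure Ω}
  [IsProbabilityMeasure P] {W : ℝ≥0 → Ω → ℝ}

/-- The discounted discounted-asset process `Z_t = e^{-(d+σ²/2)t + σ W_t}`. -/
def Zp (d σ : ℝ) (W : ℝ≥0 → Ω → ℝ) (t : ℝ≥0) (ω : Ω) : ℝ :=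
  rexp (-(d + σ ^ 2 / 2) * (t : ℝ) + σ * W t ω)

lemma Zp_pos {d σ : ℝ} {t : ℝ≥0} {ω : Ω} : 0 < Zp d σ W t ω := Real.exp_pos _

lemma meas_W (hW : IsStandardBrownian ℱ P W) (t : ℝ≥0) : Measurable (W t) :=
  (hW.adapted t).mono (ℱ.le t) le_rfl

lemma meas_Zp (hW : IsStandardBrownian ℱ P W) (d σ : ℝ) (t : ℝ≥0) :
    Measurable (Zp d σ W t) :=
  ((measurable_const.add ((meas_W hW t).const_mul σ)).exp)

lemma strongly_meas_Zp (hW : IsStandardBrownian ℱ P W) (d σ : ℝ) (t : ℝ≥0) :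
    StronglyMeasurable[ℱ t] (Zp d σ W t) :=
  ((measurable_const.add ((hW.adapted t).const_mul σ)).exp).stronglyMeasurable

lemma integrable_exp_incr (hW : IsStandardBrownian ℱ P W) (c : ℝ) {s t : ℝ≥0} (hst : s ≤ t) :
    Integrable (fun ω => rexp (c * (W t ω - W s ω))) P := by
  have hXm : Measurable fun ω => W t ω - W s ω := (meas_W hW t).sub (meas_W hW s)
  have h := integrable_exp_gauss c (t - s)
  rw [← hW.gauss_incr s t hst] at h
  exact (integrable_map_measure (meas_exp_mul c).aestronglyMeasurable
    hXm.aemeasurable).mp h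

lemma integral_exp_incr (hW : IsStandardBrownian ℱ P W) (c : ℝ) {s t : ℝ≥0} (hst : s ≤ t) :
    ∫ ω, rexp (c * (W t ω - W s ω)) ∂P = rexp (c ^ 2 * ((t : ℝ) - s) / 2) := by
  have hXm : Measurable fun ω => W t ω - W s ω := (meas_W hW t).sub (meas_W hW s)
  have h := integral_map hXm.aemeasurable (f := fun x => rexp (c * x))
    (meas_exp_mul c).aestronglyMeasurable (μ := P)
  rw [hW.gauss_incr s t hst, integral_exp_gauss] at h
  rw [← h, NNReal.coe_sub hst]

lemma Zp_eq_mul (d σ : ℝ) {s t : ℝ≥0} (hst : s ≤ t) (ω : Ω) :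
    Zp d σ W t ω = Zp d σ W s ω *
      (rexp (-(d + σ ^ 2 / 2) * ((t : ℝ) - s)) * rexp (σ * (W t ω - W s ω))) := by
  simp only [Zp, ← Real.exp_add]
  ring_nf

lemma integrable_Zp (hW : IsStandardBrownian ℱ P W) (d σ : ℝ) (t : ℝ≥0) :
    Integrable (Zp d σ W t) P := by
  have h0 : (0 : ℝ≥0) ≤ t := zero_le
  refine ((integrable_exp_incr hW σ h0).const_mul
    (rexp (-(d + σ ^ 2 / 2) * (t : ℝ)))).congr ?_
  filter_upwards [hW.init] with ω h0ω
  simp only [Zp, ← Real.exp_add, h0ω, sub_zero]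

lemma integral_Zp (hW : IsStandardBrownian ℱ P W) {d : ℝ} (hd : 0 ≤ d) (σ : ℝ) (t : ℝ≥0) :
    ∫ ω, Zp d σ W t ω ∂P = rexp (-(d * t)) := by
  have h0 : (0 : ℝ≥0) ≤ t := zero_le
  have heq : Zp d σ W t =ᵐ[P]
      fun ω => rexp (-(d + σ ^ 2 / 2) * (t : ℝ)) * rexp (σ * (W t ω - W 0 ω)) := by
    filter_upwards [hW.init] with ω h0ω
    simp only [Zp, ← Real.exp_add, h0ω, sub_zero]
  rw [integral_congr_ae heq, integral_const_mul, integral_exp_incr hW σ h0, ← Real.exp_add]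
  norm_num
  ring_nf

lemma condexp_Zp_le (hW : IsStandardBrownian ℱ P W) {d σ : ℝ} (hd : 0 ≤ d)
    {s t : ℝ≥0} (hst : s ≤ t) : P[Zp d σ W t | ℱ s] ≤ᵐ[P] Zp d σ W s := by
  set c₁ : ℝ := rexp (-(d + σ ^ 2 / 2) * ((t : ℝ) - s)) with hc₁
  set g : Ω → ℝ := fun ω => c₁ * rexp (σ * (W t ω - W s ω)) with hg
  have hfg : Zp d σ W t = Zp d σ W s * g := funext fun ω => Zp_eq_mul d σ hst ω
  have hgint : Integrable g P := (integrable_exp_incr hW σ hst).const_mul c₁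
  have hmul : P[Zp d σ W s * g | ℱ s] =ᵐ[P] Zp d σ W s * P[g | ℱ s] :=
    condExp_mul_of_stronglyMeasurable_left (strongly_meas_Zp hW d σ s)
      (hfg ▸ integrable_Zp hW d σ t) hgint
  -- conditional expectation of g
  have hXm : Measurable fun ω => W t ω - W s ω := (meas_W hW t).sub (meas_W hW s)
  have hsm : StronglyMeasurable[MeasurableSpace.comap (fun ω => W t ω - W s ω) (borel ℝ)] g := by
    have hX : Measurable[MeasurableSpace.comap (fun ω => W t ω - W s ω) (borel ℝ)]
        (fun ω => W t ω - W s ω) := by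
      intro u hu
      exact ⟨u, hu, rfl⟩
    borelize ℝ
    exact ((hX.const_mul σ).exp.const_mul c₁).stronglyMeasurable
  have hindep := hW.indep_incr s t hst
  have hcond : P[g | ℱ s] =ᵐ[P] fun _ => ∫ ω, g ω ∂P :=
    condExp_indep_eq hXm.comap_le (ℱ.le s) hsm hindep
  have hintg : ∫ ω, g ω ∂P = rexp (-(d * ((t : ℝ) - s))) := by
    rw [hg, integral_const_mul, integral_exp_incr hW σ hst, hc₁, ← Real.exp_add]
    ring_nf
  calc P[Zp d σ W t | ℱ s] =ᵐ[P] Zp d σ W s * P[g | ℱ s] := hfg ▸ hmul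
    _ =ᵐ[P] fun ω => Zp d σ W s ω * rexp (-(d * ((t : ℝ) - s))) := by
        filter_upwards [hcond] with ω hω
        simp [hω, hintg]
    _ ≤ᵐ[P] Zp d σ W s := by
        refine ae_of_all _ fun ω => ?_
        have h1 : rexp (-(d * ((t : ℝ) - s))) ≤ 1 := by
          rw [Real.exp_le_one_iff, neg_nonpos]
          have : (s : ℝ) ≤ t := hst
          nlinarith
        exact mul_le_of_le_one_right Zp_pos.le h1

-- continued


/-- dyadic grid point `k / 2^n` in `ℝ≥0`. -/
def tg (n k : ℕ) : ℝ≥0 := (k : ℝ≥0) / 2 ^ n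

lemma tg_mono (n : ℕ) : Monotone (tg n) := fun i j hij => by
  exact div_le_div_of_nonneg_right (by exact_mod_cast hij) (by positivity)

lemma tg_lt_iff {n i j : ℕ} : tg n i < tg n j ↔ i < j := by
  unfold tg
  rw [div_lt_div_iff_of_pos_right (by positivity)]
  exact_mod_cast Nat.cast_lt (α := ℝ≥0)

lemma tg_zero (n : ℕ) : tg n 0 = 0 := by simp [tg]

/-- The discrete filtration along the grid. -/
def gridF (𝓕 : Filtration ℝ≥0 m) (n : ℕ) : Filtration ℕ m :=
  ⟨fun k => 𝓕 (tg n k), fun i j hij => 𝓕.mono (tg_mono n hij), fun k => 𝓕.le _⟩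


/-- Discretized stopping time, capped at `M`. -/
def disc (η : Ω → ℝ≥0∞) (n M : ℕ) (ω : Ω) : ℕ :=
  ((Finset.range M).filter fun k => ¬ η ω ≤ (tg n k : ℝ≥0∞)).card

lemma disc_le (η : Ω → ℝ≥0∞) (n M : ℕ) (ω : Ω) : disc η n M ω ≤ M :=
  le_trans (Finset.card_filter_le _ _) (by simp)

lemma disc_le_iff {η : Ω → ℝ≥0∞} {n M k : ℕ} {ω : Ω} :
    disc η n M ω ≤ k ↔ M ≤ k ∨ η ω ≤ (tg n k : ℝ≥0∞) := by
  constructor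
  · intro h
    by_contra hc
    push_neg at hc
    obtain ⟨hkM, hηk⟩ := hc
    have hsub : Finset.range (k + 1) ⊆
        (Finset.range M).filter fun j => ¬ η ω ≤ (tg n j : ℝ≥0∞) := by
      intro j hj
      rw [Finset.mem_range] at hj
      refine Finset.mem_filter.mpr ⟨Finset.mem_range.mpr (lt_of_lt_of_le hj hkM), fun hle => ?_⟩
      exact absurd (le_trans hle (ENNReal.coe_le_coe.mpr
        (tg_mono n (Nat.lt_succ_iff.mp hj)))) hηk.not_ge
    have := Finset.card_le_card hsub
    rw [Finset.card_range] at this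
    unfold disc at h
    omega
  · intro h
    rcases h with hMk | hηk
    · exact le_trans (disc_le η n M ω) hMk
    · have hsub : ((Finset.range M).filter fun j => ¬ η ω ≤ (tg n j : ℝ≥0∞)) ⊆
          Finset.range k := by
        intro j hj
        rw [Finset.mem_filter] at hj
        rw [Finset.mem_range]
        by_contra hjk
        push_neg at hjk
        exact hj.2 (le_trans hηk (ENNReal.coe_le_coe.mpr (tg_mono n hjk)))
      have := Finset.card_le_card hsub
      rwa [Finset.card_range] at this
    
lemma disc_isStoppingTime {η : Ω → ℝ≥0∞} (hη : IsStoppingTimeE ℱ η) (n M : ℕ) :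
    IsStoppingTime (gridF ℱ n) (fun ω => (disc η n M ω : WithTop ℕ)) := by
  intro k
  have h2 : {ω | (disc η n M ω : WithTop ℕ) ≤ WithTop.some k} = {ω | disc η n M ω ≤ k} := by
    ext ω; simp
  rw [h2]
  have : {ω | disc η n M ω ≤ k} = if M ≤ k then Set.univ
      else {ω | η ω ≤ (tg n k : ℝ≥0∞)} := by
    ext ω
    by_cases h : M ≤ k <;> simp [disc_le_iff, h]
  rw [this]
  by_cases h : M ≤ k <;> simp only [h, if_true, if_false]
  · exact MeasurableSet.univ
  · exact hη (tg n k)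

lemma measurable_eta {η : Ω → ℝ≥0∞} (hη : IsStoppingTimeE ℱ η) : Measurable η := by
  refine measurable_of_Iic fun x => ?_
  rcases eq_or_ne x ⊤ with rfl | hx
  · simp
  · have : η ⁻¹' Set.Iic x = {ω | η ω ≤ ((x.toNNReal : ℝ≥0) : ℝ≥0∞)} := by
      ext ω; simp [Set.mem_Iic, ENNReal.coe_toNNReal hx]
    rw [this]
    exact ℱ.le _ _ (hη x.toNNReal)

lemma measurable_disc {η : Ω → ℝ≥0∞} (hη : IsStoppingTimeE ℱ η) (n M : ℕ) :
    Measurable (disc η n M) := by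
  have h : ∀ k, MeasurableSet {ω | disc η n M ω ≤ k} := fun k =>
    (gridF ℱ n).le k _ (by simpa using disc_isStoppingTime hη n M k)
  refine measurable_to_countable' fun k => ?_
  have : (disc η n M) ⁻¹' {k} = {ω | disc η n M ω ≤ k} \
      (if k = 0 then ∅ else {ω | disc η n M ω ≤ k - 1}) := by
    ext ω
    rcases Nat.eq_zero_or_pos k with rfl | hk
    · simp [Nat.le_zero]
    · simp only [Set.mem_preimage, Set.mem_singleton_iff, if_neg hk.ne',
        Set.mem_diff, Set.mem_setOf_eq]
      omega
  rw [this]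
  rcases Nat.eq_zero_or_pos k with rfl | hk
  · simpa using (h 0).diff MeasurableSet.empty
  · simpa [if_neg hk.ne'] using (h k).diff (h (k - 1))


lemma measurable_comp_nat {g : Ω → ℕ} (hg : Measurable g) {f : ℕ → Ω → ℝ}
    (hf : ∀ k, Measurable (f k)) : Measurable fun ω => f (g ω) ω :=
  (measurable_from_prod_countable_left (f := fun p : Ω × ℕ => f p.2 p.1)
    (fun k => hf k)).comp (measurable_id.prodMk hg)

lemma supermart (hW : IsStandardBrownian ℱ P W) {d : ℝ} (hd : 0 ≤ d) (σ : ℝ) (n : ℕ) :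
    Supermartingale (fun k => Zp d σ W (tg n k)) (gridF ℱ n) P :=
  ⟨fun k => strongly_meas_Zp hW d σ (tg n k),
   fun i j hij => condexp_Zp_le hW hd (tg_mono n hij),
   fun k => integrable_Zp hW d σ (tg n k)⟩

lemma integrable_stoppedValue_disc (hW : IsStandardBrownian ℱ P W) (d σ : ℝ)
    {η : Ω → ℝ≥0∞} (hη : IsStoppingTimeE ℱ η) (n M : ℕ) :
    Integrable (stoppedValue (fun k => Zp d σ W (tg n k)) (fun ω => (disc η n M ω : WithTop ℕ))) P :=
  integrable_stoppedValue ℕ (disc_isStoppingTime hη n M)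
    (fun k => integrable_Zp hW d σ (tg n k)) (fun ω => WithTop.coe_le_coe.mpr (disc_le η n M ω))

lemma ost_bound (hW : IsStandardBrownian ℱ P W) {d : ℝ} (hd : 0 ≤ d) (σ : ℝ)
    {η : Ω → ℝ≥0∞} (hη : IsStoppingTimeE ℱ η) (n M : ℕ) :
    ∫ ω, stoppedValue (fun k => Zp d σ W (tg n k)) (fun ω => (disc η n M ω : WithTop ℕ)) ω ∂P ≤ 1 := by
  set f : ℕ → Ω → ℝ := fun k => Zp d σ W (tg n k) with hf
  have hsub : Submartingale (-f) (gridF ℱ n) P := (supermart hW hd σ n).neg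
  have h0 : IsStoppingTime (gridF ℱ n) (fun _ : Ω => (0 : ℕ)) := isStoppingTime_const _ 0
  have hmono := hsub.expected_stoppedValue_mono h0 (disc_isStoppingTime hη n M)
    (fun ω => WithTop.coe_le_coe.mpr zero_le) (fun ω => WithTop.coe_le_coe.mpr (disc_le η n M ω))
  have hneg : ∀ (τ : Ω → WithTop ℕ), stoppedValue (-f) τ = -(stoppedValue f τ) := by
    intro τ; funext ω; simp [stoppedValue]
  simp only [hneg, Pi.neg_apply, integral_neg, neg_le_neg_iff] at hmono
  refine le_trans hmono ?_
  have : stoppedValue f (fun _ : Ω => (0 : ℕ)) = Zp d σ W 0 := by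
    funext ω; simp [stoppedValue, hf, tg_zero]
  rw [this, integral_Zp hW hd σ 0]
  simp

lemma ost_lintegral (hW : IsStandardBrownian ℱ P W) {d : ℝ} (hd : 0 ≤ d) (σ : ℝ)
    {η : Ω → ℝ≥0∞} (hη : IsStoppingTimeE ℱ η) (n M : ℕ) :
    ∫⁻ ω, ENNReal.ofReal (stoppedValue (fun k => Zp d σ W (tg n k)) (fun ω => (disc η n M ω : WithTop ℕ)) ω) ∂P
      ≤ 1 := by
  rw [← ofReal_integral_eq_lintegral_ofReal (integrable_stoppedValue_disc hW d σ hη n M)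
    (ae_of_all _ fun ω => Zp_pos.le)]
  exact ENNReal.ofReal_le_one.mpr (ost_bound hW hd σ hη n M)

/-- index of the smallest grid point of level `n` that is `≥ η`. -/
def ceilT (η : Ω → ℝ≥0∞) (n : ℕ) (ω : Ω) : ℕ := ⌈((η ω).toNNReal : ℝ) * 2 ^ n⌉₊

lemma disc_eq_of_le {η : Ω → ℝ≥0∞} {n M : ℕ} {ω : Ω} (hω : η ω ≠ ⊤)
    (hM : ceilT η n ω ≤ M) : disc η n M ω = ceilT η n ω := by
  have hkey : ∀ j : ℕ, (¬ η ω ≤ (tg n j : ℝ≥0∞)) ↔ j < ceilT η n ω := by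
    intro j
    rw [not_le, ← ENNReal.coe_toNNReal hω, ENNReal.coe_lt_coe]
    unfold tg ceilT
    rw [Nat.lt_ceil, div_lt_iff₀ (by positivity), ← NNReal.coe_lt_coe]
    push_cast
    exact Iff.rfl
  unfold disc
  have : ((Finset.range M).filter fun k => ¬ η ω ≤ (tg n k : ℝ≥0∞))
      = Finset.range (ceilT η n ω) := by
    ext j
    simp only [Finset.mem_filter, Finset.mem_range, hkey j]
    exact ⟨fun h => h.2, fun h => ⟨lt_of_lt_of_le h hM, h⟩⟩
  rw [this, Finset.card_range]

lemma measurable_natCeil : Measurable fun x : ℝ => (⌈x⌉₊ : ℕ) :=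
  Nat.ceil_mono.measurable

lemma measurable_ceilT {η : Ω → ℝ≥0∞} (hη : IsStoppingTimeE ℱ η) (n : ℕ) :
    Measurable (ceilT η n) :=
  measurable_natCeil.comp ((measurable_coe_nnreal_real.comp
    ((measurable_eta hη).ennreal_toNNReal)).mul_const _)

lemma tendsto_tg_ceil (a : ℝ≥0) :
    Tendsto (fun n : ℕ => tg n ⌈(a : ℝ) * 2 ^ n⌉₊) atTop (𝓝 a) := by
  rw [← NNReal.tendsto_coe]
  have hub : ∀ n : ℕ, ((tg n ⌈(a : ℝ) * 2 ^ n⌉₊ : ℝ≥0) : ℝ) ≤ (a : ℝ) + ((2 : ℝ) ^ n)⁻¹ := by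
    intro n
    unfold tg
    push_cast
    rw [div_le_iff₀ (by positivity)]
    have h1 : ((⌈(a : ℝ) * 2 ^ n⌉₊ : ℝ)) < (a : ℝ) * 2 ^ n + 1 :=
      Nat.ceil_lt_add_one (by positivity)
    have h2 : ((a : ℝ) + ((2 : ℝ) ^ n)⁻¹) * 2 ^ n = (a : ℝ) * 2 ^ n + 1 := by
      field_simp
    rw [h2]
    exact h1.le
  have hlb : ∀ n : ℕ, (a : ℝ) ≤ ((tg n ⌈(a : ℝ) * 2 ^ n⌉₊ : ℝ≥0) : ℝ) := by
    intro n
    unfold tg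
    push_cast
    rw [le_div_iff₀ (by positivity)]
    exact Nat.le_ceil _
  refine tendsto_of_tendsto_of_tendsto_of_le_of_le ?_ ?_ hlb hub
  · exact tendsto_const_nhds
  · have : Tendsto (fun n : ℕ => ((2 : ℝ) ^ n)⁻¹) atTop (𝓝 0) :=
      tendsto_inv_atTop_zero.comp (tendsto_pow_atTop_atTop_of_one_lt one_lt_two)
    simpa using tendsto_const_nhds.add this

lemma bound_n (hW : IsStandardBrownian ℱ P W) {d : ℝ} (hd : 0 ≤ d) (σ : ℝ)
    {η : Ω → ℝ≥0∞} (hη : IsStoppingTimeE ℱ η) (n : ℕ) :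
    ∫⁻ ω, ({ω | η ω ≠ ⊤}.indicator
      (fun ω => ENNReal.ofReal (Zp d σ W (tg n (ceilT η n ω)) ω))) ω ∂P ≤ 1 := by
  set f : ℕ → Ω → ℝ := fun k => Zp d σ W (tg n k) with hf
  set F : ℕ → Ω → ℝ≥0∞ := fun M ω => ENNReal.ofReal (stoppedValue f (fun ω => (disc η n M ω : WithTop ℕ)) ω) with hF
  have hFmeas : ∀ M, AEMeasurable (F M) P := by
    intro M
    refine ((measurable_comp_nat (measurable_disc hη n M)
      (fun k => meas_Zp hW d σ (tg n k))).ennreal_ofReal).aemeasurable.congr (ae_of_all _ fun ω => ?_)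
    rfl
  have hle : ∀ ω, ({ω | η ω ≠ ⊤}.indicator
      (fun ω => ENNReal.ofReal (Zp d σ W (tg n (ceilT η n ω)) ω))) ω
        ≤ atTop.liminf fun M => F M ω := by
    intro ω
    by_cases hω : η ω = ⊤
    · rw [Set.indicator_of_notMem (by simp [hω])]
      exact zero_le
    · rw [Set.indicator_of_mem (by simp [hω])]
      have hev : ∀ M ≥ ceilT η n ω, F M ω
          = ENNReal.ofReal (Zp d σ W (tg n (ceilT η n ω)) ω) := by
        intro M hM
        rw [hF]
        simp only [stoppedValue, disc_eq_of_le hω hM]; rfl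
      have : Tendsto (fun M => F M ω) atTop
          (𝓝 (ENNReal.ofReal (Zp d σ W (tg n (ceilT η n ω)) ω))) := by
        refine tendsto_const_nhds.congr' ?_
        filter_upwards [eventually_ge_atTop (ceilT η n ω)] with M hM
        exact (hev M hM).symm
      exact le_of_eq this.liminf_eq.symm
  calc ∫⁻ ω, ({ω | η ω ≠ ⊤}.indicator
        (fun ω => ENNReal.ofReal (Zp d σ W (tg n (ceilT η n ω)) ω))) ω ∂P
      ≤ ∫⁻ ω, atTop.liminf (fun M => F M ω) ∂P := lintegral_mono hle
    _ ≤ atTop.liminf fun M => ∫⁻ ω, F M ω ∂P := lintegral_liminf_le' hFmeas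
    _ ≤ 1 := by
        refine liminf_le_of_frequently_le' (Frequently.of_forall fun M => ?_)
        exact ost_lintegral hW hd σ hη n M

lemma key_bound (hW : IsStandardBrownian ℱ P W) {d : ℝ} (hd : 0 ≤ d) (σ : ℝ)
    {η : Ω → ℝ≥0∞} (hη : IsStoppingTimeE ℱ η) :
    ∫⁻ ω, ({ω | η ω ≠ ⊤}.indicator
      (fun ω => ENNReal.ofReal (Zp d σ W (η ω).toNNReal ω))) ω ∂P ≤ 1 := by
  set G : ℕ → Ω → ℝ≥0∞ := fun n => {ω | η ω ≠ ⊤}.indicator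
    (fun ω => ENNReal.ofReal (Zp d σ W (tg n (ceilT η n ω)) ω)) with hG
  have hGmeas : ∀ n, AEMeasurable (G n) P := by
    intro n
    have hset : MeasurableSet {ω | η ω ≠ ⊤} :=
      ((measurable_eta hη) (measurableSet_singleton ⊤)).compl
    exact (((measurable_comp_nat (measurable_ceilT hη n)
      (fun k => meas_Zp hW d σ (tg n k))).ennreal_ofReal).indicator hset).aemeasurable
  have htendsto : ∀ᵐ ω ∂P, Tendsto (fun n => G n ω) atTop
      (𝓝 (({ω | η ω ≠ ⊤}.indicator
        (fun ω => ENNReal.ofReal (Zp d σ W (η ω).toNNReal ω))) ω)) := by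
    filter_upwards [hW.cont] with ω hcont
    by_cases hω : η ω = ⊤
    · simp only [hG, Set.indicator_of_notMem (by simp [hω] : ω ∉ {ω | η ω ≠ ⊤})]
      exact tendsto_const_nhds
    · simp only [hG, Set.indicator_of_mem (by simp [hω] : ω ∈ {ω | η ω ≠ ⊤})]
      set η' : ℝ≥0 := (η ω).toNNReal with hη'
      have hθ : Tendsto (fun n => tg n (ceilT η n ω)) atTop (𝓝 η') := by
        rw [← NNReal.tendsto_coe]
        have hub : ∀ n : ℕ, ((tg n (ceilT η n ω) : ℝ≥0) : ℝ)
            ≤ (η' : ℝ) + ((2 : ℝ) ^ n)⁻¹ := by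
          intro n
          unfold tg ceilT
          push_cast
          rw [div_le_iff₀ (by positivity)]
          have h1 : ((⌈(η' : ℝ) * 2 ^ n⌉₊ : ℝ)) < (η' : ℝ) * 2 ^ n + 1 :=
            Nat.ceil_lt_add_one (by positivity)
          have h2 : ((η' : ℝ) + ((2 : ℝ) ^ n)⁻¹) * 2 ^ n = (η' : ℝ) * 2 ^ n + 1 := by
            field_simp
          rw [h2]
          exact h1.le
        have hlb : ∀ n : ℕ, (η' : ℝ) ≤ ((tg n (ceilT η n ω) : ℝ≥0) : ℝ) := by
          intro n
          unfold tg ceilT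
          push_cast
          rw [le_div_iff₀ (by positivity)]
          exact Nat.le_ceil _
        refine tendsto_of_tendsto_of_tendsto_of_le_of_le ?_ ?_ hlb hub
        · exact tendsto_const_nhds
        · have : Tendsto (fun n : ℕ => ((2 : ℝ) ^ n)⁻¹) atTop (𝓝 0) :=
            tendsto_inv_atTop_zero.comp (tendsto_pow_atTop_atTop_of_one_lt one_lt_two)
          simpa using tendsto_const_nhds.add this
      have hZcont : Continuous fun t : ℝ≥0 => Zp d σ W t ω := by
        unfold Zp
        exact (((continuous_const.mul NNReal.continuous_coe).add
          (continuous_const.mul hcont))).rexp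
      exact (ENNReal.continuous_ofReal.tendsto _).comp ((hZcont.tendsto η').comp hθ)
  have hcongr : ({ω | η ω ≠ ⊤}.indicator
      (fun ω => ENNReal.ofReal (Zp d σ W (η ω).toNNReal ω)))
        =ᵐ[P] fun ω => atTop.liminf fun n => G n ω := by
    filter_upwards [htendsto] with ω hω
    exact hω.liminf_eq.symm
  rw [lintegral_congr_ae hcongr]
  refine le_trans (lintegral_liminf_le' hGmeas) ?_
  exact liminf_le_of_frequently_le' (Frequently.of_forall fun n => bound_n hW hd σ hη n)

section Payoff

variable {r d σ K δ : ℝ} {ρ τ : Ω → ℝ≥0∞}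

lemma min_stopping (hρ : IsStoppingTimeE ℱ ρ) (hτ : IsStoppingTimeE ℱ τ) :
    IsStoppingTimeE ℱ (fun ω => min (ρ ω) (τ ω)) := by
  intro t
  have : {ω | min (ρ ω) (τ ω) ≤ (t : ℝ≥0∞)}
      = {ω | ρ ω ≤ (t : ℝ≥0∞)} ∪ {ω | τ ω ≤ (t : ℝ≥0∞)} := by
    ext ω; simp [min_le_iff]
  rw [this]
  exact (hρ t).union (hτ t)

lemma aemeasurable_W_comp (hW : IsStandardBrownian ℱ P W) {q : Ω → ℝ≥0} (hq : Measurable q) :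
    AEMeasurable (fun ω => W (q ω) ω) P := by
  have hqn_meas : ∀ n : ℕ, Measurable fun ω => (⌈(q ω : ℝ) * 2 ^ n⌉₊ : ℕ) := fun n =>
    measurable_natCeil.comp ((measurable_coe_nnreal_real.comp hq).mul_const _)
  have hfn : ∀ n : ℕ, Measurable fun ω => W (tg n ⌈(q ω : ℝ) * 2 ^ n⌉₊) ω := fun n =>
    measurable_comp_nat (hqn_meas n) (fun k => meas_W hW (tg n k))
  refine aemeasurable_of_tendsto_metrizable_ae atTop (fun n => (hfn n).aemeasurable) ?_
  filter_upwards [hW.cont] with ω hcont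
  exact (hcont.tendsto (q ω)).comp (tendsto_tg_ceil (q ω))

lemma aemeasurable_exp_affine (hW : IsStandardBrownian ℱ P W) (c : ℝ) (σ' : ℝ) {q : Ω → ℝ≥0} (hq : Measurable q) :
    AEMeasurable (fun ω => rexp (c * (q ω : ℝ) + σ' * W (q ω) ω)) P := by
  refine Real.measurable_exp.comp_aemeasurable ?_
  exact (((measurable_coe_nnreal_real.comp hq).const_mul c).aemeasurable).add
    ((aemeasurable_W_comp hW hq).const_mul σ')

lemma aemeasurable_Zp_comp (hW : IsStandardBrownian ℱ P W) (d σ : ℝ) {q : Ω → ℝ≥0} (hq : Measurable q) :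
    AEMeasurable (fun ω => Zp d σ W (q ω) ω) P := by
  have := aemeasurable_exp_affine hW (-(d + σ ^ 2 / 2)) σ hq
  simpa [Zp] using this

lemma aemeasurable_assetN_comp (hW : IsStandardBrownian ℱ P W) (r d σ : ℝ) {q : Ω → ℝ≥0} (hq : Measurable q) :
    AEMeasurable (fun ω => assetN r d σ W (q ω) ω) P := by
  have := aemeasurable_exp_affine hW (r - d - σ ^ 2 / 2) σ hq
  simpa [assetN] using this

lemma aestronglyMeasurable_payoff (hW : IsStandardBrownian ℱ P W) (hρ : IsStoppingTimeE ℱ ρ) (hτ : IsStoppingTimeE ℱ τ)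
    (x : ℝ) : AEStronglyMeasurable (gamePayoff r d σ K δ W x ρ τ) P := by
  have hρm : Measurable ρ := measurable_eta hρ
  have hτm : Measurable τ := measurable_eta hτ
  have hSc : MeasurableSet {ω | ¬ (ρ ω = ⊤ ∧ τ ω = ⊤)} := by
    have : {ω | ¬ (ρ ω = ⊤ ∧ τ ω = ⊤)} = (ρ ⁻¹' {⊤} ∩ τ ⁻¹' {⊤})ᶜ := by
      ext ω; simp [not_and_or]
    rw [this]
    exact ((hρm (measurableSet_singleton _)).inter
      (hτm (measurableSet_singleton _))).compl
  have hT : MeasurableSet {ω | τ ω < ρ ω} := measurableSet_lt hτm hρm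
  have hexp : Measurable fun ω => rexp (-r * (min (ρ ω) (τ ω)).toReal) :=
    ((ENNReal.measurable_toReal.comp (hρm.min hτm)).const_mul (-r)).exp
  have hAτ : AEMeasurable (fun ω => max (x * assetN r d σ W (τ ω).toNNReal ω - K) 0 + δ) P :=
    ((((aemeasurable_assetN_comp hW r d σ (hτm.ennreal_toNNReal)).const_mul x).sub_const
      K).max aemeasurable_const).add_const δ
  have hAρ : AEMeasurable (fun ω => max (x * assetN r d σ W (ρ ω).toNNReal ω - K) 0) P :=
    (((aemeasurable_assetN_comp hW r d σ (hρm.ennreal_toNNReal)).const_mul x).sub_const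
      K).max aemeasurable_const
  have heq : gamePayoff r d σ K δ W x ρ τ = fun ω =>
      Set.indicator {ω | ¬ (ρ ω = ⊤ ∧ τ ω = ⊤)}
        (fun ω => rexp (-r * (min (ρ ω) (τ ω)).toReal) *
          (Set.indicator {ω | τ ω < ρ ω}
              (fun ω => max (x * assetN r d σ W (τ ω).toNNReal ω - K) 0 + δ) ω
            + Set.indicator {ω | τ ω < ρ ω}ᶜ
              (fun ω => max (x * assetN r d σ W (ρ ω).toNNReal ω - K) 0) ω)) ω := by
    funext ω
    simp only [Set.indicator_apply, Set.mem_setOf_eq, Set.mem_compl_iff, gamePayoff]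
    by_cases h1 : ρ ω = ⊤ ∧ τ ω = ⊤ <;> by_cases h2 : τ ω < ρ ω <;> simp [h1, h2]
  rw [heq]
  refine AEMeasurable.aestronglyMeasurable ?_
  exact (hexp.aemeasurable.mul ((hAτ.indicator hT).add (hAρ.indicator hT.compl))).indicator hSc

end Payoff

section DFun

variable {r d σ K δ : ℝ} {ρ τ : Ω → ℝ≥0∞}

/-- Discounted asset value at the earlier of the two stopping times. -/
def Dr (d σ : ℝ) (W : ℝ≥0 → Ω → ℝ) (ρ τ : Ω → ℝ≥0∞) (ω : Ω) : ℝ :=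
  if min (ρ ω) (τ ω) = ⊤ then 0 else Zp d σ W (min (ρ ω) (τ ω)).toNNReal ω

lemma Dr_nonneg (ω : Ω) : 0 ≤ Dr d σ W ρ τ ω := by
  unfold Dr; split_ifs
  · exact le_rfl
  · exact Zp_pos.le

lemma Dr_eq_indicator : Dr d σ W ρ τ = Set.indicator {ω | min (ρ ω) (τ ω) ≠ ⊤}
    (fun ω => Zp d σ W (min (ρ ω) (τ ω)).toNNReal ω) := by
  funext ω
  by_cases h : min (ρ ω) (τ ω) = ⊤
  · rw [Set.indicator_of_notMem (by simp only [Set.mem_setOf_eq, ne_eq, not_not]; exact h)]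
    simp [Dr, h]
  · rw [Set.indicator_of_mem (by simpa using h)]
    simp [Dr, h]

lemma aemeasurable_Dr (hW : IsStandardBrownian ℱ P W) (hρ : IsStoppingTimeE ℱ ρ)
    (hτ : IsStoppingTimeE ℱ τ) (d σ : ℝ) : AEMeasurable (Dr d σ W ρ τ) P := by
  have hρm : Measurable ρ := measurable_eta hρ
  have hτm : Measurable τ := measurable_eta hτ
  have hset : MeasurableSet {ω | min (ρ ω) (τ ω) ≠ ⊤} :=
    ((hρm.min hτm) (measurableSet_singleton ⊤)).compl
  rw [Dr_eq_indicator]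
  exact (aemeasurable_Zp_comp hW d σ ((hρm.min hτm).ennreal_toNNReal)).indicator hset

lemma lintegral_Dr_le_one (hW : IsStandardBrownian ℱ P W) (hd : 0 ≤ d)
    (hρ : IsStoppingTimeE ℱ ρ) (hτ : IsStoppingTimeE ℱ τ) :
    ∫⁻ ω, ENNReal.ofReal (Dr d σ W ρ τ ω) ∂P ≤ 1 := by
  have h := key_bound hW hd σ (min_stopping hρ hτ)
  refine le_trans (le_of_eq (lintegral_congr fun ω => ?_)) h
  unfold Dr
  by_cases hm : min (ρ ω) (τ ω) = ⊤
  · rw [if_pos hm, Set.indicator_of_notMem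
      (by simp only [Set.mem_setOf_eq, ne_eq, not_not]; exact hm)]
    simp
  · rw [if_neg hm, Set.indicator_of_mem (by simpa using hm)]

lemma integrable_Dr (hW : IsStandardBrownian ℱ P W) (hd : 0 ≤ d)
    (hρ : IsStoppingTimeE ℱ ρ) (hτ : IsStoppingTimeE ℱ τ) :
    Integrable (Dr d σ W ρ τ) P := by
  refine ⟨(aemeasurable_Dr hW hρ hτ d σ).aestronglyMeasurable, ?_⟩
  rw [hasFiniteIntegral_iff_ofReal (ae_of_all _ Dr_nonneg)]
  exact lt_of_le_of_lt (lintegral_Dr_le_one hW hd hρ hτ) ENNReal.one_lt_top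

lemma integral_Dr_le_one (hW : IsStandardBrownian ℱ P W) (hd : 0 ≤ d)
    (hρ : IsStoppingTimeE ℱ ρ) (hτ : IsStoppingTimeE ℱ τ) :
    ∫ ω, Dr d σ W ρ τ ω ∂P ≤ 1 := by
  rw [integral_eq_lintegral_of_nonneg_ae (ae_of_all _ Dr_nonneg)
    (aemeasurable_Dr hW hρ hτ d σ).aestronglyMeasurable]
  calc (∫⁻ ω, ENNReal.ofReal (Dr d σ W ρ τ ω) ∂P).toReal
      ≤ (1 : ℝ≥0∞).toReal :=
        ENNReal.toReal_mono ENNReal.one_ne_top (lintegral_Dr_le_one hW hd hρ hτ)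
    _ = 1 := by simp

end DFun

section PayoffIneq

variable {r d σ K δ x y : ℝ} {ρ τ : Ω → ℝ≥0∞}

lemma exp_mul_assetN (r d σ : ℝ) (t : ℝ≥0∞) (ω : Ω) :
    rexp (-r * t.toReal) * assetN r d σ W t.toNNReal ω = Zp d σ W t.toNNReal ω := by
  unfold assetN Zp
  rw [← Real.exp_add]
  congr 1
  have h : t.toReal = ((t.toNNReal : ℝ≥0) : ℝ) := rfl
  rw [h]
  ring

lemma max_lip {a : ℝ} (ha : 0 ≤ a) (hxy : x ≤ y) (K : ℝ) :
    max (y * a - K) 0 ≤ max (x * a - K) 0 + (y - x) * a := by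
  have h1 : 0 ≤ (y - x) * a := mul_nonneg (by linarith) ha
  exact max_le (by nlinarith [le_max_left (x * a - K) 0])
    (by nlinarith [le_max_right (x * a - K) 0])

lemma branch_lip (hxy : x ≤ y) {e A Z δ' : ℝ} (he : 0 < e) (hA : 0 ≤ A)
    (hZ : e * A = Z) (K : ℝ) :
    e * (max (y * A - K) 0 + δ') ≤ e * (max (x * A - K) 0 + δ') + (y - x) * Z := by
  have h3 := max_lip hA hxy K
  nlinarith [mul_le_mul_of_nonneg_left h3 he.le]

lemma branch_le {x e A Z δ δ' : ℝ} (hx : 0 ≤ x) (he : 0 < e) (he1 : e ≤ 1)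
    (hA : 0 ≤ A) (hZ : e * A = Z) (hδ' : 0 ≤ δ') (hδδ : δ' ≤ δ) (K : ℝ) (hK : 0 < K) :
    e * (max (x * A - K) 0 + δ') ≤ x * Z + δ := by
  have h1 : max (x * A - K) 0 ≤ x * A := max_le (by nlinarith) (mul_nonneg hx hA)
  nlinarith [mul_le_mul_of_nonneg_left h1 he.le, mul_le_of_le_one_left hδ' he1]

lemma payoff_nonneg (hδ : 0 ≤ δ) (x : ℝ) (ω : Ω) :
    0 ≤ gamePayoff r d σ K δ W x ρ τ ω := by
  unfold gamePayoff
  split_ifs with h1 h2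
  · exact le_rfl
  · exact mul_nonneg (Real.exp_pos _).le (add_nonneg (le_max_right _ 0) hδ)
  · exact mul_nonneg (Real.exp_pos _).le (le_max_right _ 0)

lemma payoff_mono (hxy : x ≤ y) (ω : Ω) :
    gamePayoff r d σ K δ W x ρ τ ω ≤ gamePayoff r d σ K δ W y ρ τ ω := by
  unfold gamePayoff
  split_ifs with h1 h2
  · exact le_rfl
  · refine mul_le_mul_of_nonneg_left ?_ (Real.exp_pos _).le
    exact add_le_add_left (max_le_max (sub_le_sub_right
      (mul_le_mul_of_nonneg_right hxy (Real.exp_pos _).le) K) le_rfl) δ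
  · refine mul_le_mul_of_nonneg_left ?_ (Real.exp_pos _).le
    exact max_le_max (sub_le_sub_right
      (mul_le_mul_of_nonneg_right hxy (Real.exp_pos _).le) K) le_rfl

lemma min_ne_top {ω : Ω} (h1 : ¬ (ρ ω = ⊤ ∧ τ ω = ⊤)) : min (ρ ω) (τ ω) ≠ ⊤ :=
  fun hc => h1 (by constructor <;> [exact min_eq_top.mp hc |>.1; exact min_eq_top.mp hc |>.2])

lemma payoff_lip (hxy : x ≤ y) (ω : Ω) :
    gamePayoff r d σ K δ W y ρ τ ω
      ≤ gamePayoff r d σ K δ W x ρ τ ω + (y - x) * Dr d σ W ρ τ ω := by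
  unfold gamePayoff
  by_cases h1 : ρ ω = ⊤ ∧ τ ω = ⊤
  · rw [if_pos h1, if_pos h1]
    have hd0 : Dr d σ W ρ τ ω = 0 := by
      unfold Dr; rw [if_pos (min_eq_top.mpr h1)]
    rw [hd0]
    simp
  · rw [if_neg h1, if_neg h1]
    have hmin : min (ρ ω) (τ ω) ≠ ⊤ := min_ne_top h1
    have hD : Dr d σ W ρ τ ω = Zp d σ W (min (ρ ω) (τ ω)).toNNReal ω := by
      unfold Dr; rw [if_neg hmin]
    by_cases h2 : τ ω < ρ ω
    · rw [if_pos h2, if_pos h2, hD]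
      have hmin_eq : min (ρ ω) (τ ω) = τ ω := min_eq_right h2.le
      rw [hmin_eq]
      exact branch_lip hxy (Real.exp_pos _) (Real.exp_pos _).le
        (exp_mul_assetN (W := W) r d σ (τ ω) ω) K
    · rw [if_neg h2, if_neg h2, hD]
      have hmin_eq : min (ρ ω) (τ ω) = ρ ω := min_eq_left (not_lt.mp h2)
      rw [hmin_eq]
      have := branch_lip (δ' := 0) hxy (Real.exp_pos (-r * (ρ ω).toReal))
        (Real.exp_pos _).le (exp_mul_assetN (W := W) r d σ (ρ ω) ω) K
      simpa [assetN] using this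

lemma payoff_le (hr : 0 ≤ r) (hK : 0 < K) (hδ : 0 ≤ δ) (hx : 0 ≤ x) (ω : Ω) :
    gamePayoff r d σ K δ W x ρ τ ω ≤ x * Dr d σ W ρ τ ω + δ := by
  unfold gamePayoff
  by_cases h1 : ρ ω = ⊤ ∧ τ ω = ⊤
  · rw [if_pos h1]
    have hd0 : Dr d σ W ρ τ ω = 0 := by
      unfold Dr; rw [if_pos (min_eq_top.mpr h1)]
    rw [hd0]
    linarith
  · rw [if_neg h1]
    have hmin : min (ρ ω) (τ ω) ≠ ⊤ := min_ne_top h1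
    have hD : Dr d σ W ρ τ ω = Zp d σ W (min (ρ ω) (τ ω)).toNNReal ω := by
      unfold Dr; rw [if_neg hmin]
    have he1 : rexp (-r * (min (ρ ω) (τ ω)).toReal) ≤ 1 := by
      rw [Real.exp_le_one_iff]
      have := ENNReal.toReal_nonneg (a := min (ρ ω) (τ ω))
      nlinarith
    by_cases h2 : τ ω < ρ ω
    · rw [if_pos h2, hD]
      have hmin_eq : min (ρ ω) (τ ω) = τ ω := min_eq_right h2.le
      rw [hmin_eq] at he1 ⊢
      exact branch_le hx (Real.exp_pos _) he1 (Real.exp_pos _).le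
        (exp_mul_assetN (W := W) r d σ (τ ω) ω) hδ le_rfl K hK
    · rw [if_neg h2, hD]
      have hmin_eq : min (ρ ω) (τ ω) = ρ ω := min_eq_left (not_lt.mp h2)
      rw [hmin_eq] at he1 ⊢
      have := branch_le (δ' := 0) hx (Real.exp_pos (-r * (ρ ω).toReal)) he1
        (Real.exp_pos _).le (exp_mul_assetN (W := W) r d σ (ρ ω) ω) le_rfl hδ K hK
      simpa [assetN] using this

end PayoffIneq

section JLemmas

variable {r d σ K δ x y : ℝ} {ρ τ : Ω → ℝ≥0∞}

lemma gameJ_nonneg (hδ : 0 ≤ δ) : 0 ≤ gameJ P r d σ K δ W x ρ τ :=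
  integral_nonneg (payoff_nonneg hδ x)

lemma integrable_payoff_down (hW : IsStandardBrownian ℱ P W) (hρ : IsStoppingTimeE ℱ ρ)
    (hτ : IsStoppingTimeE ℱ τ) (hδ : 0 ≤ δ) (hxy : x ≤ y)
    (h : Integrable (gamePayoff r d σ K δ W y ρ τ) P) :
    Integrable (gamePayoff r d σ K δ W x ρ τ) P := by
  refine h.mono (aestronglyMeasurable_payoff hW hρ hτ x) (ae_of_all _ fun ω => ?_)
  rw [Real.norm_eq_abs, Real.norm_eq_abs, abs_of_nonneg (payoff_nonneg hδ x ω),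
    abs_of_nonneg (payoff_nonneg hδ y ω)]
  exact payoff_mono hxy ω

lemma integrable_payoff_up (hW : IsStandardBrownian ℱ P W) (hd : 0 ≤ d)
    (hρ : IsStoppingTimeE ℱ ρ) (hτ : IsStoppingTimeE ℱ τ) (hδ : 0 ≤ δ) (hxy : x ≤ y)
    (h : Integrable (gamePayoff r d σ K δ W x ρ τ) P) :
    Integrable (gamePayoff r d σ K δ W y ρ τ) P := by
  have hDi : Integrable (Dr d σ W ρ τ) P := integrable_Dr hW hd hρ hτ
  refine (h.add (hDi.const_mul (y - x))).mono
    (aestronglyMeasurable_payoff hW hρ hτ y) (ae_of_all _ fun ω => ?_)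
  rw [Real.norm_eq_abs, abs_of_nonneg (payoff_nonneg hδ y ω)]
  refine le_trans (payoff_lip hxy ω) (le_abs_self _)

lemma gameJ_mono (hW : IsStandardBrownian ℱ P W) (hd : 0 ≤ d) (hρ : IsStoppingTimeE ℱ ρ)
    (hτ : IsStoppingTimeE ℱ τ) (hδ : 0 ≤ δ) (hxy : x ≤ y) :
    gameJ P r d σ K δ W x ρ τ ≤ gameJ P r d σ K δ W y ρ τ := by
  by_cases h : Integrable (gamePayoff r d σ K δ W y ρ τ) P
  · exact integral_mono (integrable_payoff_down hW hρ hτ hδ hxy h) h (payoff_mono hxy)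
  · have hx' : ¬ Integrable (gamePayoff r d σ K δ W x ρ τ) P :=
      fun hc => h (integrable_payoff_up hW hd hρ hτ hδ hxy hc)
    unfold gameJ
    rw [integral_undef h, integral_undef hx']

lemma gameJ_lip (hW : IsStandardBrownian ℱ P W) (hd : 0 ≤ d) (hρ : IsStoppingTimeE ℱ ρ)
    (hτ : IsStoppingTimeE ℱ τ) (hδ : 0 ≤ δ) (hxy : x ≤ y) :
    gameJ P r d σ K δ W y ρ τ ≤ gameJ P r d σ K δ W x ρ τ + (y - x) := by
  have hDi : Integrable (Dr d σ W ρ τ) P := integrable_Dr hW hd hρ hτ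
  by_cases h : Integrable (gamePayoff r d σ K δ W y ρ τ) P
  · have hxint := integrable_payoff_down hW hρ hτ hδ hxy h
    have hstep : gameJ P r d σ K δ W y ρ τ
        ≤ ∫ ω, (gamePayoff r d σ K δ W x ρ τ ω + (y - x) * Dr d σ W ρ τ ω) ∂P :=
      integral_mono h (hxint.add (hDi.const_mul (y - x))) (payoff_lip hxy)
    rw [integral_add hxint (hDi.const_mul (y - x)), integral_const_mul] at hstep
    have hD1 : ∫ ω, Dr d σ W ρ τ ω ∂P ≤ 1 := integral_Dr_le_one hW hd hρ hτ
    have hD0 : 0 ≤ ∫ ω, Dr d σ W ρ τ ω ∂P := integral_nonneg Dr_nonneg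
    have hyx : 0 ≤ y - x := by linarith
    have hJx : gameJ P r d σ K δ W x ρ τ = ∫ ω, gamePayoff r d σ K δ W x ρ τ ω ∂P := rfl
    have hJy : gameJ P r d σ K δ W y ρ τ = ∫ ω, gamePayoff r d σ K δ W y ρ τ ω ∂P := rfl
    rw [hJy] at hstep
    rw [hJx, hJy]
    nlinarith [hstep, hD1, hD0, hyx]
  · have hx' : ¬ Integrable (gamePayoff r d σ K δ W x ρ τ) P :=
      fun hc => h (integrable_payoff_up hW hd hρ hτ hδ hxy hc)
    unfold gameJ
    rw [integral_undef h, integral_undef hx']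
    linarith

lemma gameJ_le (hW : IsStandardBrownian ℱ P W) (hr : 0 ≤ r) (hd : 0 ≤ d) (hK : 0 < K)
    (hδ : 0 ≤ δ) (hx : 0 ≤ x) (hρ : IsStoppingTimeE ℱ ρ) (hτ : IsStoppingTimeE ℱ τ) :
    gameJ P r d σ K δ W x ρ τ ≤ x + δ := by
  have hDi : Integrable (Dr d σ W ρ τ) P := integrable_Dr hW hd hρ hτ
  by_cases h : Integrable (gamePayoff r d σ K δ W x ρ τ) P
  · have hstep : gameJ P r d σ K δ W x ρ τ
        ≤ ∫ ω, (x * Dr d σ W ρ τ ω + δ) ∂P :=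
      integral_mono h ((hDi.const_mul x).add (integrable_const δ))
        (payoff_le hr hK hδ hx)
    rw [integral_add (hDi.const_mul x) (integrable_const δ), integral_const_mul,
      integral_const] at hstep
    simp only [probReal_univ, measure_univ, ENNReal.toReal_one, smul_eq_mul, one_mul] at hstep
    have hD1 : ∫ ω, Dr d σ W ρ τ ω ∂P ≤ 1 := integral_Dr_le_one hW hd hρ hτ
    have hD0 : 0 ≤ ∫ ω, Dr d σ W ρ τ ω ∂P := integral_nonneg Dr_nonneg
    nlinarith [hstep, hD1, hD0, hx]
  · unfold gameJ
    rw [integral_undef h]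
    linarith

end JLemmas

end GameAux

open GameAux

/-- The value function of the perpetual δ-penalty call option is non-decreasing in the initial
asset price and Lipschitz continuous with Lipschitz constant 1. -/
theorem gameValue_monotone_lipschitz {Ω : Type*} {m : MeasurableSpace Ω}
    (ℱ : Filtration ℝ≥0 m) (P : Measure Ω) [IsProbabilityMeasure P] (W : ℝ≥0 → Ω → ℝ)
    (hW : IsStandardBrownian ℱ P W) (r d σ K δ : ℝ)
    (hr : 0 < r) (hd : 0 ≤ d) (hσ : 0 < σ) (hK : 0 < K) (hδ : 0 < δ)
    (x y : ℝ) (hx : 0 < x) (hxy : x ≤ y) :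
    0 ≤ gameValue ℱ P r d σ K δ W y - gameValue ℱ P r d σ K δ W x ∧
      gameValue ℱ P r d σ K δ W y - gameValue ℱ P r d σ K δ W x ≤ y - x := by
  haveI hne : Nonempty {τ : Ω → ℝ≥0∞ // IsStoppingTimeE ℱ τ} :=
    ⟨⟨fun _ => 0, fun t => by simpa using (MeasurableSet.univ : MeasurableSet[ℱ t] Set.univ)⟩⟩
  set X := {τ : Ω → ℝ≥0∞ // IsStoppingTimeE ℱ τ}
  set S : ℝ → X → ℝ := fun z τ' => ⨆ ρ' : X, gameJ P r d σ K δ W z ρ'.1 τ'.1 with hS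
  have hBdd : ∀ z : ℝ, 0 ≤ z → ∀ τ' : X,
      BddAbove (Set.range fun ρ' : X => gameJ P r d σ K δ W z ρ'.1 τ'.1) := by
    intro z hz τ'
    refine ⟨z + δ, ?_⟩
    rintro _ ⟨ρ', rfl⟩
    exact gameJ_le hW hr.le hd hK hδ.le hz ρ'.2 τ'.2
  have hy0 : (0 : ℝ) ≤ y := by linarith
  have hS_nonneg : ∀ z : ℝ, 0 ≤ z → ∀ τ' : X, 0 ≤ S z τ' := by
    intro z hz τ'
    refine le_trans ?_ (le_ciSup (hBdd z hz τ') (Classical.arbitrary X))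
    exact gameJ_nonneg hδ.le
  have hSBddBelow : ∀ z : ℝ, 0 ≤ z → BddBelow (Set.range (S z)) := by
    intro z hz
    refine ⟨0, ?_⟩
    rintro _ ⟨τ', rfl⟩
    exact hS_nonneg z hz τ'
  have h_mono : ∀ τ' : X, S x τ' ≤ S y τ' := by
    intro τ'
    exact ciSup_mono (hBdd y hy0 τ') fun ρ' =>
      gameJ_mono hW hd ρ'.2 τ'.2 hδ.le hxy
  have h_lip : ∀ τ' : X, S y τ' ≤ S x τ' + (y - x) := by
    intro τ'
    refine ciSup_le fun ρ' => ?_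
    refine le_trans (gameJ_lip hW hd ρ'.2 τ'.2 hδ.le hxy) ?_
    exact add_le_add_left (le_ciSup (hBdd x hx.le τ') ρ') _
  have hVx : gameValue ℱ P r d σ K δ W x = ⨅ τ' : X, S x τ' := rfl
  have hVy : gameValue ℱ P r d σ K δ W y = ⨅ τ' : X, S y τ' := rfl
  constructor
  · rw [hVx, hVy, sub_nonneg]
    exact ciInf_mono (hSBddBelow x hx.le) h_mono
  · rw [hVx, hVy]
    have h1 : ∀ τ' : X, (⨅ τ'' : X, S y τ'') ≤ S x τ' + (y - x) := fun τ' =>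
      le_trans (ciInf_le (hSBddBelow y hy0) τ') (h_lip τ')
    have h2 : (⨅ τ'' : X, S y τ'') - (y - x) ≤ ⨅ τ' : X, S x τ' :=
      le_ciInf fun τ' => by linarith [h1 τ']
    linarith


end
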